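/- The spiral S = { t·exp(πi(1 - 1/t)) : t ∈ (0,1] } ⊆ ℂ intersects the positive real axis { x ∈ ℝ : x > 0 } (viewed inside ℂ) in an infinite set; moreover this intersection is a discrete subset of ℂ accumulating only at 0. -/

import Mathlib

open Complex

private noncomputable def spf (n : ℕ) : ℂ := ((1 / (2 * n + 1) : ℝ) : ℂ)

private lemma spf_inj : Function.Injective spf := by
  intro m n h
  have h' : (1 / (2 * (m:ℝ) + 1)) = 1 / (2 * (n:ℝ) + 1) := by
    exact_mod_cast Complex.ofReal_injective h
  field_simp at h'
  have : (m:ℝ) = n := by linarith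
  exact_mod_cast this

private lemma spiral_inter_eq :
    {z : ℂ | ∃ t : ℝ, 0 < t ∧ t ≤ 1 ∧
      z = (t : ℂ) * Complex.exp (Real.pi * Complex.I * ((1 - 1 / t : ℝ) : ℂ))} ∩
    {z : ℂ | z.im = 0 ∧ 0 < z.re} = Set.range spf := by
  ext z
  constructor
  · rintro ⟨⟨t, ht0, ht1, hz⟩, him, hre⟩
    have hz' : z = ((t * Real.cos (Real.pi * (1 - 1/t)) : ℝ) : ℂ)
        + ((t * Real.sin (Real.pi * (1 - 1/t)) : ℝ) : ℂ) * Complex.I := by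
      have hrw : (Real.pi : ℂ) * Complex.I * ((1 - 1 / t : ℝ) : ℂ)
          = ((Real.pi * (1 - 1/t) : ℝ) : ℂ) * Complex.I := by push_cast; ring
      rw [hz, hrw, Complex.exp_mul_I]
      push_cast
      ring
    have him2 : z.im = t * Real.sin (Real.pi * (1 - 1/t)) := by
      rw [hz']
      simp only [Complex.add_im, Complex.ofReal_im, Complex.mul_im, Complex.ofReal_re,
        Complex.I_im, Complex.I_re, mul_zero, mul_one, zero_add, add_zero, zero_mul]
    have him' : t * Real.sin (Real.pi * (1 - 1/t)) = 0 := by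
      rw [him2] at him; exact him
    have hsin : Real.sin (Real.pi * (1 - 1/t)) = 0 := by
      rcases mul_eq_zero.1 him' with h | h
      · exact absurd h ht0.ne'
      · exact h
    obtain ⟨k, hk⟩ := Real.sin_eq_zero_iff.1 hsin
    have hc : (k : ℝ) = 1 - 1/t := by
      have h2 : Real.pi * (k:ℝ) = Real.pi * (1 - 1/t) := by
        rw [mul_comm]; exact hk
      exact mul_left_cancel₀ Real.pi_ne_zero h2
    have harg : Real.pi * (1 - 1/t) = (k:ℝ) * Real.pi := by rw [← hc]; ring
    rw [harg] at hz'
    have hcosk : Real.cos ((k:ℝ) * Real.pi) = (-1 : ℝ) ^ k := by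
      simpa using Real.cos_int_mul_pi_sub 0 k
    have hsink : Real.sin ((k:ℝ) * Real.pi) = 0 := by
      rw [harg] at hsin; exact hsin
    rw [hcosk, hsink] at hz'
    have hre2 : z.re = t * ((-1:ℝ) ^ k) := by
      rw [hz']
      simp only [Complex.add_re, Complex.ofReal_re, Complex.mul_re, Complex.ofReal_im,
        Complex.I_im, Complex.I_re, mul_zero, mul_one, zero_add, add_zero, zero_mul, sub_zero]
    have hre' : 0 < t * (-1 : ℝ) ^ k := by
      rw [hre2] at hre; exact hre
    have hkeven : Even k := by
      by_contra hodd
      rw [Int.not_even_iff_odd] at hodd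
      rw [hodd.neg_one_zpow] at hre'
      nlinarith
    rw [hkeven.neg_one_zpow] at hz'
    obtain ⟨m, hm⟩ := hkeven
    have h1t : (1:ℝ) ≤ 1/t := one_le_one_div ht0 ht1
    have hmr : (k:ℝ) = 2 * (m:ℝ) := by rw [hm]; push_cast; ring
    have hmle : (m:ℤ) ≤ 0 := by
      have : 2 * (m:ℝ) ≤ 0 := by
        rw [← hmr, hc]; linarith
      have : (m:ℝ) ≤ 0 := by linarith
      exact_mod_cast this
    set n : ℕ := (-m).toNat with hn
    have hnm : (n:ℝ) = -(m:ℝ) := by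
      have : ((-m).toNat : ℤ) = -m := Int.toNat_of_nonneg (by omega)
      exact_mod_cast this
    have hteq : t = 1 / (2 * (n:ℝ) + 1) := by
      have h1 : 1/t = 2 * (n:ℝ) + 1 := by
        rw [hnm]
        have := hc
        rw [hmr] at this
        linarith
      rw [← h1, one_div_one_div]
    refine ⟨n, ?_⟩
    rw [spf, ← hteq, hz']
    push_cast
    ring
  · rintro ⟨n, rfl⟩
    have hpos : (0:ℝ) < 2 * (n:ℝ) + 1 := by positivity
    set t : ℝ := 1 / (2 * (n:ℝ) + 1) with ht
    have ht0 : 0 < t := by positivity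
    have ht1 : t ≤ 1 := by
      rw [ht]
      rw [div_le_one hpos]
      linarith [Nat.cast_nonneg (α := ℝ) n]
    have hinv : 1/t = 2 * (n:ℝ) + 1 := by rw [ht, one_div_one_div]
    constructor
    · refine ⟨t, ht0, ht1, ?_⟩
      have harg : (Real.pi : ℂ) * Complex.I * ((1 - 1 / t : ℝ) : ℂ)
          = ((-(n:ℤ) : ℤ) : ℂ) * (2 * Real.pi * Complex.I) := by
        have : (1 - 1/t : ℝ) = -(2 * (n:ℝ)) := by rw [hinv]; ring
        rw [this]
        push_cast
        ring
      rw [harg, Complex.exp_int_mul_two_pi_mul_I, mul_one]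
      rfl
    · constructor
      · simp [spf]
      · simp only [spf, Complex.ofReal_re]
        positivity

private lemma spf_tendsto : Filter.Tendsto spf Filter.atTop (nhds 0) := by
  have h1 : Filter.Tendsto (fun n : ℕ => 2 * (n:ℝ) + 1) Filter.atTop Filter.atTop := by
    apply Filter.tendsto_atTop_add_const_right
    exact (tendsto_natCast_atTop_atTop).const_mul_atTop two_pos
  have h2 : Filter.Tendsto (fun n : ℕ => 1 / (2 * (n:ℝ) + 1)) Filter.atTop (nhds 0) := by
    simpa [one_div, Pi.inv_def] using h1.inv_tendsto_atTop
  have h3 : Filter.Tendsto (fun n : ℕ => ((1 / (2 * (n:ℝ) + 1) : ℝ) : ℂ))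
      Filter.atTop (nhds ((0:ℝ) : ℂ)) := (Complex.continuous_ofReal.tendsto 0).comp h2
  rw [Complex.ofReal_zero] at h3
  exact h3

theorem spiral_meets_positive_axis_infinitely :
    let S : Set ℂ := {z | ∃ t : ℝ, 0 < t ∧ t ≤ 1 ∧
      z = (t : ℂ) * Complex.exp (Real.pi * Complex.I * ((1 - 1 / t : ℝ) : ℂ))}
    let P : Set ℂ := {z | z.im = 0 ∧ 0 < z.re}
    (S ∩ P).Infinite ∧
    (∀ z ∈ S ∩ P, ∃ ε > (0:ℝ), ∀ z' ∈ S ∩ P, z' ∈ Metric.ball z ε → z' = z) ∧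
    (∀ w : ℂ, w ∈ closure (S ∩ P) → w ∉ S ∩ P → w = 0) := by
  intro S P
  have hSP : S ∩ P = Set.range spf := spiral_inter_eq
  refine ⟨?_, ?_, ?_⟩
  · rw [hSP]
    exact Set.infinite_range_of_injective spf_inj
  · intro z hz
    rw [hSP] at hz
    obtain ⟨n, rfl⟩ := hz
    set ε : ℝ := 1 / (2 * (n:ℝ) + 1) - 1 / (2 * (n:ℝ) + 3) with hε
    have hn1 : (0:ℝ) < 2 * (n:ℝ) + 1 := by positivity
    have hn3 : (0:ℝ) < 2 * (n:ℝ) + 3 := by positivity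
    have hεpos : 0 < ε := by
      rw [hε]
      have : 1 / (2 * (n:ℝ) + 3) < 1 / (2 * (n:ℝ) + 1) := by
        apply one_div_lt_one_div_of_lt hn1
        linarith
      linarith
    refine ⟨ε, hεpos, ?_⟩
    intro z' hz' hball
    rw [hSP] at hz'
    obtain ⟨m, rfl⟩ := hz'
    by_contra hne
    have hmn : m ≠ n := fun h => hne (by rw [h])
    have hdist : |1 / (2 * (m:ℝ) + 1) - 1 / (2 * (n:ℝ) + 1)| < ε := by
      have := Metric.mem_ball.1 hball
      rwa [spf, spf, Complex.dist_eq, ← Complex.ofReal_sub, Complex.norm_real, Real.norm_eq_abs] at this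
    have hm1 : (0:ℝ) < 2 * (m:ℝ) + 1 := by positivity
    rcases lt_or_gt_of_ne hmn with hlt | hgt
    · -- m < n : spf m is farther from 0, gap at least ε
      have hmn' : (2 * (m:ℝ) + 3) ≤ 2 * (n:ℝ) + 1 := by
        have : (m:ℝ) + 1 ≤ n := by exact_mod_cast hlt
        linarith
      have h1 : 1 / (2 * (n:ℝ) + 1) ≤ 1 / (2 * (m:ℝ) + 3) := by
        apply one_div_le_one_div_of_le (by positivity) hmn'
      -- gap(m) ≥ gap(n)
      have hgap : 1 / (2 * (n:ℝ) + 1) - 1 / (2 * (n:ℝ) + 3)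
          ≤ 1 / (2 * (m:ℝ) + 1) - 1 / (2 * (m:ℝ) + 3) := by
        have e1 : 1 / (2 * (n:ℝ) + 1) - 1 / (2 * (n:ℝ) + 3)
            = 2 / ((2 * (n:ℝ) + 1) * (2 * (n:ℝ) + 3)) := by
          field_simp; ring
        have e2 : 1 / (2 * (m:ℝ) + 1) - 1 / (2 * (m:ℝ) + 3)
            = 2 / ((2 * (m:ℝ) + 1) * (2 * (m:ℝ) + 3)) := by
          field_simp; ring
        rw [e1, e2]
        apply div_le_div_of_nonneg_left (by norm_num) (by positivity)
        have hmn2 : (m:ℝ) ≤ n := by exact_mod_cast hlt.le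
        apply mul_le_mul <;> nlinarith
      have hge : 1 / (2 * (m:ℝ) + 1) - 1 / (2 * (n:ℝ) + 1) ≥ ε := by
        rw [hε]; linarith
      have habs : 1 / (2 * (m:ℝ) + 1) - 1 / (2 * (n:ℝ) + 1)
          ≤ |1 / (2 * (m:ℝ) + 1) - 1 / (2 * (n:ℝ) + 1)| := le_abs_self _
      linarith
    · -- n < m
      have hmn' : (2 * (n:ℝ) + 3) ≤ 2 * (m:ℝ) + 1 := by
        have : (n:ℝ) + 1 ≤ m := by exact_mod_cast hgt
        linarith
      have h1 : 1 / (2 * (m:ℝ) + 1) ≤ 1 / (2 * (n:ℝ) + 3) :=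
        one_div_le_one_div_of_le hn3 hmn'
      have hge : 1 / (2 * (n:ℝ) + 1) - 1 / (2 * (m:ℝ) + 1) ≥ ε := by
        rw [hε]; linarith
      have habs : 1 / (2 * (n:ℝ) + 1) - 1 / (2 * (m:ℝ) + 1)
          ≤ |1 / (2 * (m:ℝ) + 1) - 1 / (2 * (n:ℝ) + 1)| := by
        rw [abs_sub_comm]; exact le_abs_self _
      linarith
  · intro w hw hwn
    rw [hSP] at hw hwn
    have hcl : IsClosed (insert (0:ℂ) (Set.range spf)) :=
      spf_tendsto.isCompact_insert_range.isClosed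
    have hsub : closure (Set.range spf) ⊆ insert (0:ℂ) (Set.range spf) :=
      closure_minimal (Set.subset_insert _ _) hcl
    rcases hsub hw with h | h
    · exact h
    · exact absurd h hwn
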